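/- Suppose (A,B,C) ≠ (6,7,10) is a triple of positive integers with A!·B! = C!, A ≤ B ≤ C - 2, and B ≥ 10^6. Then B - A > C - log(C+1)/log 2 - 3·log log(C+1)/log 2 - 3.9411. -/

import Mathlib

open Real


private lemma l2lb : (0.6931471803:ℝ) < Real.log 2 := Real.log_two_gt_d9
private lemma l2ub : Real.log 2 < 0.6931471808 := Real.log_two_lt_d9
private lemma l2pos : (0:ℝ) < Real.log 2 := by linarith [l2lb]

/-- upper bound on log via powers of two -/
private lemma log_le_q {x : ℝ} {d m : ℕ} (hd : 0 < d) (hx : 1 ≤ x)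
    (h : x ^ d ≤ 2 ^ m) : Real.log x ≤ ((m:ℝ)/d) * Real.log 2 := by
  have h1 : (d:ℝ) * Real.log x ≤ (m:ℝ) * Real.log 2 := by
    rw [← Real.log_pow, ← Real.log_pow]
    exact Real.log_le_log (by positivity) h
  have hd' : (0:ℝ) < d := by exact_mod_cast hd
  rw [div_mul_eq_mul_div, le_div_iff₀ hd']
  linarith
private lemma q_le_log {x : ℝ} {d m : ℕ} (hd : 0 < d) (hx : 0 < x)
    (h : (2:ℝ) ^ m ≤ x ^ d) : ((m:ℝ)/d) * Real.log 2 ≤ Real.log x := by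
  have h1 : (m:ℝ) * Real.log 2 ≤ (d:ℝ) * Real.log x := by
    rw [← Real.log_pow, ← Real.log_pow]
    exact Real.log_le_log (by positivity) h
  have hd' : (0:ℝ) < d := by exact_mod_cast hd
  rw [div_mul_eq_mul_div, div_le_iff₀ hd']
  linarith

private lemma exp_quad {y : ℝ} (hy : 0 ≤ y) : 1 + y + y^2/4 ≤ Real.exp y := by
  have h1 : 1 + y/2 ≤ Real.exp (y/2) := by linarith [Real.add_one_le_exp (y/2)]
  have h2 : (1 + y/2)^2 ≤ (Real.exp (y/2))^2 := by
    apply sq_le_sq' <;> nlinarith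
  have h3 : Real.exp (y/2)^2 = Real.exp y := by
    rw [sq, ← Real.exp_add]; congr 1; ring
  nlinarith

/-- log₂(x+1) ≤ 2 + x/4 for x ≥ 0 -/
private lemma log2_lin {x : ℝ} (hx : 0 ≤ x) : Real.log (x+1) ≤ (2 + x/4) * Real.log 2 := by
  have key : x + 1 ≤ 4 * Real.exp (x/4 * Real.log 2) := by
    have h2 : 1 + (x/4*Real.log 2) + (x/4*Real.log 2)^2/4 ≤ Real.exp (x/4*Real.log 2) :=
      exp_quad (by positivity)
    nlinarith [l2lb, sq_nonneg x, sq_nonneg (Real.log 2)]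
  have h3 := Real.log_le_log (by positivity) key
  rw [Real.log_mul (by norm_num) (Real.exp_ne_zero _), Real.log_exp] at h3
  have h4 : Real.log 4 = 2 * Real.log 2 := by
    rw [show (4:ℝ) = 2^2 by norm_num, Real.log_pow]; push_cast; ring
  rw [h4] at h3
  linarith

/-- 2^(binary digit sum) ≤ n+1 -/
private lemma two_pow_digitsum_le : ∀ n : ℕ, 2 ^ (Nat.digits 2 n).sum ≤ n + 1 := by
  intro n
  induction n using Nat.strong_induction_on with
  | _ n ih =>
    rcases Nat.eq_zero_or_pos n with h0 | h0
    · simp [h0]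
    · rw [Nat.digits_def' (by norm_num : 1 < 2) h0]
      simp only [List.sum_cons]
      have hlt : n / 2 < n := Nat.div_lt_self h0 (by norm_num)
      have ih2 := ih (n/2) hlt
      have hr : n % 2 = 0 ∨ n % 2 = 1 := by omega
      have h2 : n = 2 * (n/2) + n % 2 := (Nat.div_add_mod n 2).symm ▸ by omega
      rcases hr with hr | hr <;> rw [hr] <;> simp [pow_add, pow_succ] <;> omega

private lemma digitsum_pos : ∀ n : ℕ, 0 < n → 0 < (Nat.digits 2 n).sum := by
  intro n
  induction n using Nat.strong_induction_on with
  | _ n ih =>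
    intro h0
    rw [Nat.digits_def' (by norm_num : 1 < 2) h0]
    simp only [List.sum_cons]
    rcases (by omega : n % 2 = 1 ∨ (n % 2 = 0 ∧ 0 < n / 2)) with hr | ⟨hr, h2⟩
    · omega
    · have := ih (n/2) (Nat.div_lt_self h0 (by norm_num)) h2
      omega

private lemma digitsum_le (n : ℕ) : (Nat.digits 2 n).sum ≤ n := by
  have h1 := two_pow_digitsum_le n
  have h2 := Nat.lt_two_pow_self (n := (Nat.digits 2 n).sum)
  omega

/-- Legendre for p = 2 -/
private lemma v2_factorial (n : ℕ) : padicValNat 2 (Nat.factorial n) = n - (Nat.digits 2 n).sum := by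
  have := @sub_one_mul_padicValNat_factorial 2 ⟨Nat.prime_two⟩ n
  simpa using this

/-- n! ≤ m^(n-1) for n ≤ m -/
private lemma factorial_le_pow_pred : ∀ (n m : ℕ), n ≤ m → Nat.factorial n ≤ m ^ (n - 1) := by
  intro n
  induction n with
  | zero => intro m _; simp [Nat.factorial]
  | succ n ih =>
    intro m hm
    rcases Nat.eq_zero_or_pos n with h0 | h0
    · subst h0; simp [Nat.factorial]
    · have h1 : Nat.factorial n ≤ m ^ (n-1) := ih m (by omega)
      have : Nat.factorial (n+1) = (n+1) * Nat.factorial n := rfl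
      rw [this]
      calc (n+1) * Nat.factorial n ≤ m * m^(n-1) := Nat.mul_le_mul hm h1
        _ = m^n := by rw [← pow_succ']; congr 1; omega
        _ = m^(n+1-1) := by congr 1

/-- Stirling-type upper bound -/
private lemma log_factorial_le (n : ℕ) : Real.log (Nat.factorial n) ≤ (n+1) * Real.log (n+1) - n := by
  have key : ∀ m : ℕ, ((Nat.factorial m : ℕ) : ℝ) ≤ (m+1)^(m+1) * Real.exp (-m) := by
    intro m
    induction m with
    | zero => simp
    | succ m ih =>
      have h1 : ((Nat.factorial (m+1) : ℕ) : ℝ) = (m+1) * (Nat.factorial m : ℕ) := by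
        push_cast [Nat.factorial_succ]; ring
      have hm1 : (0:ℝ) < (m:ℝ)+1 := by positivity
      have hm2 : (0:ℝ) < (m:ℝ)+2 := by positivity
      have key2 : ((m:ℝ)+1)^(m+2) * Real.exp 1 ≤ ((m:ℝ)+2)^(m+2) := by
        have hl : Real.log (((m:ℝ)+1)/((m:ℝ)+2)) ≤ ((m:ℝ)+1)/((m:ℝ)+2) - 1 :=
          Real.log_le_sub_one_of_pos (by positivity)
        have hle : 1 ≤ ((m:ℝ)+2) * (Real.log ((m:ℝ)+2) - Real.log ((m:ℝ)+1)) := by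
          rw [Real.log_div (by positivity) (by positivity)] at hl
          have heq : ((m:ℝ)+1)/((m:ℝ)+2) - 1 = -(1/((m:ℝ)+2)) := by field_simp; ring
          rw [heq] at hl
          have h2 : 1/((m:ℝ)+2) ≤ Real.log ((m:ℝ)+2) - Real.log ((m:ℝ)+1) := by linarith
          calc (1:ℝ) = ((m:ℝ)+2) * (1/((m:ℝ)+2)) := by field_simp
            _ ≤ ((m:ℝ)+2) * (Real.log ((m:ℝ)+2) - Real.log ((m:ℝ)+1)) := by
                apply mul_le_mul_of_nonneg_left h2 (by positivity)
        -- exponentiate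
        have h3 : Real.log (((m:ℝ)+1)^(m+2) * Real.exp 1) ≤ Real.log (((m:ℝ)+2)^(m+2)) := by
          rw [Real.log_mul (by positivity) (Real.exp_ne_zero _), Real.log_exp,
            Real.log_pow, Real.log_pow]
          push_cast
          nlinarith [hle]
        have := Real.exp_le_exp.2 h3
        rwa [Real.exp_log (by positivity), Real.exp_log (by positivity)] at this
      rw [h1]
      have hee : Real.exp 1 * Real.exp (-((m:ℝ)+1)) = Real.exp (-(m:ℝ)) := by
        rw [← Real.exp_add]; congr 1; ring
      have step : ((m:ℝ)+1) * (((m:ℝ)+1)^(m+1) * Real.exp (-(m:ℝ))) =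
          ((m:ℝ)+1)^(m+2) * Real.exp 1 * Real.exp (-((m:ℝ)+1)) := by
        rw [mul_assoc (((m:ℝ)+1)^(m+2)), hee]
        rw [show m+2 = (m+1)+1 from rfl, pow_succ]
        ring
      calc ((m:ℝ)+1) * ((Nat.factorial m : ℕ) : ℝ) ≤ ((m:ℝ)+1) * (((m:ℝ)+1)^(m+1) * Real.exp (-(m:ℝ))) := by
            apply mul_le_mul_of_nonneg_left _ (by positivity)
            convert ih using 2 <;> push_cast <;> ring
        _ = ((m:ℝ)+1)^(m+2) * Real.exp 1 * Real.exp (-((m:ℝ)+1)) := step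
        _ ≤ ((m:ℝ)+2)^(m+2) * Real.exp (-((m:ℝ)+1)) := by
            apply mul_le_mul_of_nonneg_right key2 (Real.exp_nonneg _)
        _ = (((m+1:ℕ):ℝ)+1)^(m+1+1) * Real.exp (-((m+1:ℕ):ℝ)) := by
            push_cast
            rw [show m+2 = m+1+1 from rfl]
            ring
  have h1 := key n
  have h2 := Real.log_le_log (by positivity : (0:ℝ) < ((Nat.factorial n : ℕ) : ℝ)) h1
  rw [Real.log_mul (by positivity) (Real.exp_ne_zero _), Real.log_exp, Real.log_pow] at h2
  push_cast at h2 ⊢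
  linarith

set_option maxHeartbeats 1000000 in
private lemma cert_ln30 : Real.log 30 ≤ 3.4013 := by
  have h := log_le_q (x:=(30:ℝ)) (d:=1000) (m:=4907) (by norm_num) (by norm_num)
    (by exact_mod_cast (by decide +kernel : (30:ℕ)^1000 ≤ 2^4907))
  push_cast at h
  nlinarith [h, l2ub]

set_option maxHeartbeats 1000000 in
private lemma cert_ln28867 : Real.log 2.8867 ≤ 1.0606 := by
  have h := log_le_q (x:=(2.8867:ℝ)) (d:=100) (m:=153) (by norm_num) (by norm_num) (by norm_num)
  push_cast at h
  nlinarith [h, l2ub]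

set_option maxHeartbeats 1000000 in
private lemma cert_ln247 : Real.log 2.47 ≤ 0.908023 := by
  have h := log_le_q (x:=(2.47:ℝ)) (d:=100) (m:=131) (by norm_num) (by norm_num) (by norm_num)
  push_cast at h
  nlinarith [h, l2ub]

set_option maxHeartbeats 8000000 in
private lemma core_region2 (A k sA sB sC : ℕ) (b : ℝ)
    (hb : 30 ≤ b)
    (hA15 : 15 ≤ A)
    (hsA : (sA:ℝ) * Real.log 2 ≤ Real.log ((A:ℝ)+1))
    (hsB : (sB:ℝ) * Real.log 2 ≤ b)
    (hsC : 1 ≤ sC)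
    (hid : A + sC = k + sA + sB)
    (ht : Real.log ((A:ℝ)+1) ≤ b)
    (hkb : (k:ℝ) * b ≤ ((A:ℝ)+1) * Real.log ((A:ℝ)+1) - A) :
    2*(k:ℝ) + Real.log ((A:ℝ)+1)/Real.log 2 < 3 * Real.log b / Real.log 2 + 4.9411 := by
  have hl2 := l2lb; have hu2 := l2ub
  set L2 := Real.log 2 with hL2
  set t := Real.log ((A:ℝ)+1) with htdef
  set u := Real.log b with hudef
  have hbpos : (0:ℝ) < b := by linarith
  have hb2 : (900:ℝ) ≤ b^2 := by nlinarith [hb]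
  have hApos : (0:ℝ) < (A:ℝ)+1 := by positivity
  have ht1 : 4 * L2 ≤ t := by
    have h15 : (15:ℝ) ≤ (A:ℝ) := by exact_mod_cast hA15
    have h16 : (16:ℝ) ≤ (A:ℝ)+1 := by linarith
    have h2 := Real.log_le_log (by norm_num : (0:ℝ) < 16) h16
    rw [show (16:ℝ) = 2^4 by norm_num, Real.log_pow] at h2
    push_cast at h2; rw [htdef]; linarith
  have ht0 : 1 ≤ t := by linarith
  have hid' : ((A:ℝ)+1) * L2 ≤ (k:ℝ)*L2 + t + b := by
    have hc : ((A:ℝ)+1) ≤ (k:ℝ) + sA + sB := by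
      have : A + 1 ≤ k + sA + sB := by omega
      exact_mod_cast this
    have h2 := mul_le_mul_of_nonneg_right hc l2pos.le
    have h3 : ((k:ℝ) + sA + sB)*L2 = (k:ℝ)*L2 + (sA:ℝ)*L2 + (sB:ℝ)*L2 := by ring
    rw [h3] at h2
    linarith [hsA, hsB]
  have hv0 : (0:ℝ) ≤ u - Real.log 30 := by
    have := Real.log_le_log (by norm_num : (0:ℝ) < 30) hb
    rw [hudef]; linarith
  set v := u - Real.log 30 with hvdef
  have hbv : b = 30 * Real.exp v := by
    rw [hvdef, Real.exp_sub, hudef, Real.exp_log hbpos, Real.exp_log (by norm_num)]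
    field_simp
  have hexpv := exp_quad hv0
  have hln30 : Real.log 30 ≤ 3.4013 := cert_ln30
  have hu3 : u ≤ 3.4013 + v := by rw [hvdef]; linarith
  -- step1
  have hstep1 : ((A:ℝ)+1)*(b+1-t)*L2 ≤ b*(t+b) + L2 := by
    have e1 : (((A:ℝ)+1)*L2 - (k:ℝ)*L2 - t) * b ≤ b * b :=
      mul_le_mul_of_nonneg_right (by linarith) hbpos.le
    have e2 : (k:ℝ)*b*L2 ≤ (((A:ℝ)+1)*t - (A:ℝ))*L2 := mul_le_mul_of_nonneg_right hkb l2pos.le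
    nlinarith [e1, e2]
  -- crude bound on A
  have hcrude : ((A:ℝ)+1) ≤ 2.8867*b^2 := by
    have e2 : (1:ℝ) ≤ b + 1 - t := by linarith
    have m1 : (0.6931471803:ℝ)*((A:ℝ)+1) ≤ ((b+1-t)*L2)*((A:ℝ)+1) := by
      apply mul_le_mul_of_nonneg_right _ hApos.le
      have := mul_le_mul e2 hl2.le (by norm_num) (by linarith)
      linarith
    have e3 : b*(t+b) ≤ 2*b^2 := by nlinarith [mul_le_mul_of_nonneg_left ht hbpos.le]
    have key0 : (0.6931471803:ℝ)*((A:ℝ)+1) ≤ 2*b^2 + 0.6931471808 := by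
      nlinarith [m1, hstep1, e3, hu2]
    linarith [key0, hb2]
  have hln2887 : Real.log 2.8867 ≤ 1.0606 := cert_ln28867
  have ht2a : t ≤ 1.0606 + 2*u := by
    have h1 := Real.log_le_log hApos hcrude
    rw [Real.log_mul (by norm_num) (by positivity), Real.log_pow] at h1
    push_cast at h1
    rw [← htdef, ← hudef] at h1
    linarith [hln2887]
  have hrho : 2*u + 1.0606 ≤ 0.26212*b := by
    nlinarith [hexpv, hu3, hv0, hbv.ge, sq_nonneg v]
  have hA2 : ((A:ℝ)+1) ≤ 2.47*b := by
    have e5 : 0.73788*b ≤ b + 1 - t := by linarith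
    have m1 : (0.73788*b)*0.6931471803 ≤ (b+1-t)*L2 :=
      mul_le_mul e5 hl2.le (by linarith) (by linarith)
    have m2 : ((0.73788*b)*0.6931471803)*((A:ℝ)+1) ≤ ((b+1-t)*L2)*((A:ℝ)+1) :=
      mul_le_mul_of_nonneg_right m1 hApos.le
    have e6 : t + b ≤ 1.26212*b := by linarith
    have e7 : b*(t+b) ≤ 1.26212*b^2 := by
      nlinarith [mul_le_mul_of_nonneg_left e6 hbpos.le]
    have key : ((0.73788*b)*0.6931471803)*((A:ℝ)+1) ≤ 1.26212*b^2 + 0.6931471808 := by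
      nlinarith [m2, hstep1, e7, hu2]
    by_contra hcon
    push_neg at hcon
    have hxp : (0:ℝ) < (0.73788*b)*0.6931471803 := by positivity
    have := mul_lt_mul_of_pos_left hcon hxp
    nlinarith [this, key, hb2]
  have ht3 : t ≤ u + 0.91 := by
    have h1 := Real.log_le_log hApos hA2
    rw [Real.log_mul (by norm_num) (ne_of_gt hbpos)] at h1
    rw [← htdef, ← hudef] at h1
    linarith [cert_ln247, h1]
  -- kappa bound
  have hstep2 : (k:ℝ)*(b+1-t)*L2 ≤ (t+b)*(t-1) + L2 := by
    have e8 : (((A:ℝ)+1)*L2)*(t-1) ≤ ((k:ℝ)*L2 + t + b)*(t-1) :=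
      mul_le_mul_of_nonneg_right hid' (by linarith)
    have e9 : (k:ℝ)*b*L2 ≤ (((A:ℝ)+1)*t - (A:ℝ))*L2 := mul_le_mul_of_nonneg_right hkb l2pos.le
    nlinarith [e8, e9, sq_nonneg t]
  have hbu : u ≤ b - 1 := by
    rw [hudef]; exact Real.log_le_sub_one_of_pos hbpos
  have hupos : (0:ℝ) ≤ u := by
    rw [hudef]; apply Real.log_nonneg; linarith
  have hPT : (0:ℝ) < b + 1 - (u + 0.91) := by linarith
  have hstep3 : (k:ℝ)*(b+1-(u+0.91))*L2 ≤ ((u+0.91)+b)*((u+0.91)-1) + L2 := by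
    have hkL : (0:ℝ) ≤ (k:ℝ)*L2 := by positivity
    have e10 : (k:ℝ)*(b+1-(u+0.91))*L2 ≤ (k:ℝ)*(b+1-t)*L2 := by
      linarith [mul_nonneg hkL (by linarith [ht3] : (0:ℝ) ≤ (u+0.91) - t)]
    have m1 : (t+b)*(t-1) ≤ ((u+0.91)+b)*(t-1) :=
      mul_le_mul_of_nonneg_right (by linarith) (by linarith)
    have m2 : ((u+0.91)+b)*(t-1) ≤ ((u+0.91)+b)*((u+0.91)-1) :=
      mul_le_mul_of_nonneg_left (by linarith) (by linarith)
    linarith [hstep2, e10, m1, m2]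
  -- the polynomial inequality
  have hpoly : 2*(((u+0.91)+b)*((u+0.91)-1) + L2)
      < (3*u - (u+0.91) + 4.9411*L2)*(b+1-(u+0.91)) := by
    have e11 : 4.9411*0.6931471803*(b+1-(u+0.91)) ≤ 4.9411*L2*(b+1-(u+0.91)) :=
      mul_le_mul_of_nonneg_right (by linarith) hPT.le
    have husq : u^2 ≤ (3.4013+v)^2 := by nlinarith [hu3, hupos]
    have hP : 4*u^2 + 3.974712*u + 0.9962 < 2.694712*b := by
      nlinarith [hexpv, husq, hu3, hbv.ge, hv0]
    linarith [e11, hP, hu2]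
  have hfin : 2*(k:ℝ)*L2 < 3*u - (u+0.91) + 4.9411*L2 := by
    have h1 : (2*(k:ℝ)*L2)*(b+1-(u+0.91)) < (3*u - (u+0.91) + 4.9411*L2)*(b+1-(u+0.91)) := by
      nlinarith [hstep3, hpoly]
    exact lt_of_mul_lt_mul_right h1 hPT.le
  have final : 2*(k:ℝ)*L2 + t < 3*u + 4.9411*L2 := by linarith [ht3, hfin]
  have heq : 3*u/L2 + 4.9411 - (2*(k:ℝ) + t/L2) = (3*u + 4.9411*L2 - (2*(k:ℝ)*L2 + t))/L2 := by
    field_simp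
  have hpos2 : (0:ℝ) < (3*u + 4.9411*L2 - (2*(k:ℝ)*L2 + t))/L2 := div_pos (by linarith) l2pos
  linarith [heq ▸ hpos2]

set_option maxHeartbeats 1000000 in
private lemma cert_ln6671 : Real.log 66.71 ≤ 4.2005 := by
  have h := log_le_q (x:=(66.71:ℝ)) (d:=100) (m:=606) (by norm_num) (by norm_num)
    (by rw [show (66.71:ℝ) = 6671/100 by norm_num, div_pow, div_le_iff₀ (by positivity)]; exact_mod_cast (by decide +kernel : (6671:ℕ)^100 ≤ 2^606 * 100^100))
  push_cast at h; nlinarith [h, l2ub]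

set_option maxHeartbeats 1000000 in
private lemma cert_ln22434 : Real.log 2.2434 ≤ 0.80821 := by
  have h := log_le_q (x:=(2.2434:ℝ)) (d:=1000) (m:=1166) (by norm_num) (by norm_num)
    (by rw [show (2.2434:ℝ) = 11217/5000 by norm_num, div_pow, div_le_iff₀ (by positivity)]; exact_mod_cast (by decide +kernel : (11217:ℕ)^1000 ≤ 2^1166 * 5000^1000))
  push_cast at h; nlinarith [h, l2ub]

set_option maxHeartbeats 1000000 in
private lemma cert_lb_ln138144 : (2.62564:ℝ) ≤ Real.log 13.8144 := by
  have h := q_le_log (x:=(13.8144:ℝ)) (d:=1000) (m:=3788) (by norm_num) (by norm_num)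
    (by rw [show (13.8144:ℝ) = 8634/625 by norm_num, div_pow, le_div_iff₀ (by positivity)]; exact_mod_cast (by decide +kernel : 2^3788 * 625^1000 ≤ (8634:ℕ)^1000))
  push_cast at h; nlinarith [h, l2lb]

set_option maxHeartbeats 1000000 in
private lemma r1_k5 (A k sA sB sC : ℕ) (b : ℝ) (hb : 13.8144 ≤ b) (hb30 : b ≤ 30)
    (hk5 : k ≤ 5)
    (hsA : (sA:ℝ) * Real.log 2 ≤ Real.log ((A:ℝ)+1))
    (hsB : (sB:ℝ) * Real.log 2 ≤ b) (hsC : 1 ≤ sC) (hid : A + sC = k + sA + sB) :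
    2*(k:ℝ) + Real.log ((A:ℝ)+1)/Real.log 2 < 3 * Real.log b / Real.log 2 + 4.9411 := by
  have hl2 := l2lb; have hu2 := l2ub
  set L2 := Real.log 2 with hL2
  set t := Real.log ((A:ℝ)+1) with htdef
  set u := Real.log b with hudef
  have hbpos : (0:ℝ) < b := by linarith
  have hA0 : (0:ℝ) ≤ (A:ℝ) := by positivity
  have hk0 : (0:ℝ) ≤ (k:ℝ) := by positivity
  have hkr : (k:ℝ) ≤ 5 := by exact_mod_cast hk5
  have h1 : (A:ℝ)*L2 ≤ ((k:ℝ)-1)*L2 + t + b := by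
    have hc : (A:ℝ) ≤ (k:ℝ) - 1 + sA + sB := by
      have h : A + 1 ≤ k + sA + sB := by omega
      have h' : ((A:ℝ)+1) ≤ (k:ℝ) + sA + sB := by exact_mod_cast h
      linarith
    have h2 := mul_le_mul_of_nonneg_right hc l2pos.le
    have h3 : ((k:ℝ) - 1 + sA + sB)*L2 = ((k:ℝ)-1)*L2 + (sA:ℝ)*L2 + (sB:ℝ)*L2 := by ring
    rw [h3] at h2
    linarith [hsA, hsB]
  have hL1 : t ≤ (2 + (A:ℝ)/4)*L2 := log2_lin hA0
  -- A ≤ 65.71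
  have hA65 : (A:ℝ) ≤ 65.71 := by
    have e1 : (A:ℝ)*0.6931471803 ≤ (A:ℝ)*L2 := mul_le_mul_of_nonneg_left hl2.le hA0
    have e2 : ((k:ℝ)+1)*L2 ≤ ((k:ℝ)+1)*0.6931471808 :=
      mul_le_mul_of_nonneg_left hu2.le (by linarith)
    nlinarith [h1, hL1, hb30]
  have ht66 : t ≤ 4.2005 := by
    have hm : ((A:ℝ)+1) ≤ 66.71 := by linarith
    have := Real.log_le_log (by positivity) hm
    rw [← htdef] at this
    linarith [cert_ln6671]
  have hA1b : ((A:ℝ)+1) ≤ 2.2434*b := by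
    have e1 : ((A:ℝ)+1)*0.6931471803 ≤ ((A:ℝ)+1)*L2 :=
      mul_le_mul_of_nonneg_left hl2.le (by linarith)
    have e2 : (k:ℝ)*L2 ≤ (k:ℝ)*0.6931471808 := mul_le_mul_of_nonneg_left hu2.le hk0
    have e3 : ((A:ℝ)+1)*L2 = (A:ℝ)*L2 + L2 := by ring
    nlinarith [h1, hb]
  have ht2 : t ≤ 0.80821 + u := by
    have h4 := Real.log_le_log (by positivity : (0:ℝ) < (A:ℝ)+1) hA1b
    rw [Real.log_mul (by norm_num) (ne_of_gt hbpos)] at h4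
    rw [← htdef, ← hudef] at h4
    linarith [cert_ln22434]
  have hu_lb : (2.62564:ℝ) ≤ u := by
    have := Real.log_le_log (by norm_num : (0:ℝ) < 13.8144) hb
    rw [← hudef] at this
    linarith [cert_lb_ln138144]
  -- final
  have final : 2*(k:ℝ)*L2 + t < 3*u + 4.9411*L2 := by
    have e2 : (k:ℝ)*L2 ≤ (k:ℝ)*0.6931471808 := mul_le_mul_of_nonneg_left hu2.le hk0
    nlinarith [ht2, hu_lb, hkr, hl2]
  have heq : 3*u/L2 + 4.9411 - (2*(k:ℝ) + t/L2) = (3*u + 4.9411*L2 - (2*(k:ℝ)*L2 + t))/L2 := by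
    field_simp
  have hpos2 : (0:ℝ) < (3*u + 4.9411*L2 - (2*(k:ℝ)*L2 + t))/L2 := div_pos (by linarith) l2pos
  linarith [heq ▸ hpos2]

set_option maxHeartbeats 1000000 in
private lemma cert_ln81 : Real.log 81 ≤ 4.3946 := by
  have h := log_le_q (x:=(81:ℝ)) (d:=1000) (m:=6340) (by norm_num) (by norm_num)
    (by exact_mod_cast (by decide +kernel : (81:ℕ)^1000 ≤ 2^6340))
  push_cast at h; nlinarith [h, l2ub]
set_option maxHeartbeats 1000000 in
private lemma cert_ln41 : Real.log 41 ≤ 3.7139 := by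
  have h := log_le_q (x:=(41:ℝ)) (d:=1000) (m:=5358) (by norm_num) (by norm_num)
    (by exact_mod_cast (by decide +kernel : (41:ℕ)^1000 ≤ 2^5358))
  push_cast at h; nlinarith [h, l2ub]
set_option maxHeartbeats 1000000 in
private lemma cert_ln48 : Real.log 48 ≤ 3.8713 := by
  have h := log_le_q (x:=(48:ℝ)) (d:=1000) (m:=5585) (by norm_num) (by norm_num)
    (by exact_mod_cast (by decide +kernel : (48:ℕ)^1000 ≤ 2^5585))
  push_cast at h; nlinarith [h, l2ub]
set_option maxHeartbeats 1000000 in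
private lemma cert_ln55 : Real.log 55 ≤ 4.0078 := by
  have h := log_le_q (x:=(55:ℝ)) (d:=1000) (m:=5782) (by norm_num) (by norm_num)
    (by exact_mod_cast (by decide +kernel : (55:ℕ)^1000 ≤ 2^5782))
  push_cast at h; nlinarith [h, l2ub]
set_option maxHeartbeats 1000000 in
private lemma cert_ln56 : Real.log 56 ≤ 4.0258 := by
  have h := log_le_q (x:=(56:ℝ)) (d:=1000) (m:=5808) (by norm_num) (by norm_num)
    (by exact_mod_cast (by decide +kernel : (56:ℕ)^1000 ≤ 2^5808))
  push_cast at h; nlinarith [h, l2ub]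
set_option maxHeartbeats 1000000 in
private lemma cert_ln57 : Real.log 57 ≤ 4.0432 := by
  have h := log_le_q (x:=(57:ℝ)) (d:=1000) (m:=5833) (by norm_num) (by norm_num)
    (by exact_mod_cast (by decide +kernel : (57:ℕ)^1000 ≤ 2^5833))
  push_cast at h; nlinarith [h, l2ub]
set_option maxHeartbeats 1000000 in
private lemma cert_ln58 : Real.log 58 ≤ 4.0605 := by
  have h := log_le_q (x:=(58:ℝ)) (d:=1000) (m:=5858) (by norm_num) (by norm_num)
    (by exact_mod_cast (by decide +kernel : (58:ℕ)^1000 ≤ 2^5858))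
  push_cast at h; nlinarith [h, l2ub]
set_option maxHeartbeats 1000000 in
private lemma cert_ln59 : Real.log 59 ≤ 4.0778 := by
  have h := log_le_q (x:=(59:ℝ)) (d:=1000) (m:=5883) (by norm_num) (by norm_num)
    (by exact_mod_cast (by decide +kernel : (59:ℕ)^1000 ≤ 2^5883))
  push_cast at h; nlinarith [h, l2ub]
set_option maxHeartbeats 1000000 in
private lemma cert_ln60 : Real.log 60 ≤ 4.0945 := by
  have h := log_le_q (x:=(60:ℝ)) (d:=1000) (m:=5907) (by norm_num) (by norm_num)
    (by exact_mod_cast (by decide +kernel : (60:ℕ)^1000 ≤ 2^5907))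
  push_cast at h; nlinarith [h, l2ub]
set_option maxHeartbeats 1000000 in
private lemma cert_ln61 : Real.log 61 ≤ 4.1111 := by
  have h := log_le_q (x:=(61:ℝ)) (d:=1000) (m:=5931) (by norm_num) (by norm_num)
    (by exact_mod_cast (by decide +kernel : (61:ℕ)^1000 ≤ 2^5931))
  push_cast at h; nlinarith [h, l2ub]
set_option maxHeartbeats 1000000 in
private lemma cert_ln62 : Real.log 62 ≤ 4.1277 := by
  have h := log_le_q (x:=(62:ℝ)) (d:=1000) (m:=5955) (by norm_num) (by norm_num)
    (by exact_mod_cast (by decide +kernel : (62:ℕ)^1000 ≤ 2^5955))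
  push_cast at h; nlinarith [h, l2ub]
set_option maxHeartbeats 1000000 in
private lemma cert_ln63 : Real.log 63 ≤ 4.1437 := by
  have h := log_le_q (x:=(63:ℝ)) (d:=1000) (m:=5978) (by norm_num) (by norm_num)
    (by exact_mod_cast (by decide +kernel : (63:ℕ)^1000 ≤ 2^5978))
  push_cast at h; nlinarith [h, l2ub]

set_option maxHeartbeats 4000000 in
private lemma r1_mid (A k sA sB sC : ℕ) (b : ℝ) (hb : 13.8144 ≤ b) (hb30 : b ≤ 30)
    (hA15 : 15 ≤ A) (hkA : k < A) (hk6 : 6 ≤ k) (hk15 : k ≤ 15)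
    (hsA : (sA:ℝ) * Real.log 2 ≤ Real.log ((A:ℝ)+1))
    (hsB : (sB:ℝ) * Real.log 2 ≤ b) (hsC : 1 ≤ sC) (hid : A + sC = k + sA + sB)
    (hkb : (k:ℝ) * b ≤ ((A:ℝ)+1) * Real.log ((A:ℝ)+1) - A)
    (hpow : 1000001^k ≤ Nat.factorial A) : False := by
  have hl2 := l2lb; have hu2 := l2ub
  set L2 := Real.log 2 with hL2
  set t := Real.log ((A:ℝ)+1) with htdef
  have hA0 : (0:ℝ) ≤ (A:ℝ) := by positivity
  have hk0 : (0:ℝ) ≤ (k:ℝ) := by positivity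
  have hA1pos : (0:ℝ) < (A:ℝ)+1 := by positivity
  have hkr : (k:ℝ) ≤ 15 := by exact_mod_cast hk15
  have hkr1 : (1:ℝ) ≤ (k:ℝ) := by exact_mod_cast by omega
  have h1 : (A:ℝ)*L2 ≤ ((k:ℝ)-1)*L2 + t + b := by
    have hc : (A:ℝ) ≤ (k:ℝ) - 1 + sA + sB := by
      have h : A + 1 ≤ k + sA + sB := by omega
      have h' : ((A:ℝ)+1) ≤ (k:ℝ) + sA + sB := by exact_mod_cast h
      linarith
    have h2 := mul_le_mul_of_nonneg_right hc l2pos.le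
    have h3 : ((k:ℝ) - 1 + sA + sB)*L2 = ((k:ℝ)-1)*L2 + (sA:ℝ)*L2 + (sB:ℝ)*L2 := by ring
    rw [h3] at h2
    linarith [hsA, hsB]
  have hL1 : t ≤ (2 + (A:ℝ)/4)*L2 := log2_lin hA0
  have hA79 : (A:ℝ) ≤ 79.05 := by
    have e1 : (A:ℝ)*0.6931471803 ≤ (A:ℝ)*L2 := mul_le_mul_of_nonneg_left hl2.le hA0
    have e2 : ((k:ℝ)+1)*L2 ≤ ((k:ℝ)+1)*0.6931471808 :=
      mul_le_mul_of_nonneg_left hu2.le (by linarith)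
    linarith [h1, hL1, hb30, e1, e2, hkr]
  have ht80 : t ≤ 4.3946 := by
    have hm : ((A:ℝ)+1) ≤ 81 := by linarith
    have h4 := Real.log_le_log hA1pos hm
    rw [← htdef] at h4
    linarith [cert_ln81]
  have hA48 : A ≤ k + 48 := by
    have e1 : (A:ℝ)*0.6931471803 ≤ (A:ℝ)*L2 := mul_le_mul_of_nonneg_left hl2.le hA0
    have e2 : ((k:ℝ)-1)*L2 ≤ ((k:ℝ)-1)*0.6931471808 :=
      mul_le_mul_of_nonneg_left hu2.le (by linarith)
    have : (A:ℝ) < (k:ℝ) + 49 := by linarith [h1, ht80, hb30, e1, e2]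
    have h5 : (A:ℝ) < ((k + 49 : ℕ) : ℝ) := by push_cast; linarith
    exact_mod_cast Nat.lt_succ_iff.mp (by exact_mod_cast h5)
  have hblow : ((A:ℝ)+1-(k:ℝ))*L2 - t ≤ b := by
    have hc : (A:ℝ) + 1 - k - sA ≤ (sB:ℝ) := by
      have h : A + 1 ≤ k + sA + sB := by omega
      have h' : ((A:ℝ)+1) ≤ (k:ℝ) + sA + sB := by exact_mod_cast h
      linarith
    have h2 := mul_le_mul_of_nonneg_right hc l2pos.le
    have h3 : ((A:ℝ) + 1 - k - sA)*L2 = ((A:ℝ)+1-(k:ℝ))*L2 - (sA:ℝ)*L2 := by ring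
    rw [h3] at h2
    linarith [hsA, hsB]
  have hkbl : (k:ℝ)*(((A:ℝ)+1-(k:ℝ))*L2 - t) ≤ ((A:ℝ)+1)*t - (A:ℝ) :=
    le_trans (mul_le_mul_of_nonneg_left hblow hk0) hkb
  have hAx : (A:ℝ)+1-(k:ℝ) ≥ 0 := by
    have : (k:ℝ) < (A:ℝ) := by exact_mod_cast hkA
    linarith
  have hel2 : ((A:ℝ)+1-(k:ℝ))*0.6931471803 ≤ ((A:ℝ)+1-(k:ℝ))*L2 :=
    mul_le_mul_of_nonneg_left hl2.le hAx
  -- helper for amin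
  have hamin : ∀ n : ℕ, 1000001^k > Nat.factorial n → n < A := by
    intro n hn
    by_contra hcc
    push_neg at hcc
    exact absurd (le_trans hpow (Nat.factorial_le hcc)) (by omega)
  interval_cases k
  · -- k = 6
    have ha : 33 ≤ A := hamin 32 (by norm_num [Nat.factorial])
    have har : (33:ℝ) ≤ (A:ℝ) := by exact_mod_cast ha
    rcases le_or_gt A 40 with h40 | h40
    · have hm : ((A:ℝ)+1) ≤ 41 := by
        have : (A:ℝ) ≤ 40 := by exact_mod_cast h40
        linarith
      have htm : t ≤ 3.7139 := by
        have h4 := Real.log_le_log hA1pos hm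
        rw [← htdef] at h4; linarith [cert_ln41]
      have e1 : ((A:ℝ)+1)*t ≤ ((A:ℝ)+1)*3.7139 :=
        mul_le_mul_of_nonneg_left htm (by linarith)
      push_cast at hkbl
      linarith [hkbl, e1, hel2, htm, har]
    · rcases le_or_gt A 47 with h47 | h47
      · have hm : ((A:ℝ)+1) ≤ 48 := by
          have : (A:ℝ) ≤ 47 := by exact_mod_cast h47
          linarith
        have htm : t ≤ 3.8713 := by
          have h4 := Real.log_le_log hA1pos hm
          rw [← htdef] at h4; linarith [cert_ln48]
        have e1 : ((A:ℝ)+1)*t ≤ ((A:ℝ)+1)*3.8713 :=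
          mul_le_mul_of_nonneg_left htm (by linarith)
        have har2 : (41:ℝ) ≤ (A:ℝ) := by exact_mod_cast h40
        push_cast at hkbl
        linarith [hkbl, e1, hel2, htm, har2]
      · have hm : ((A:ℝ)+1) ≤ 55 := by
          have : (A:ℝ) ≤ (54:ℝ) := by exact_mod_cast hA48
          linarith
        have htm : t ≤ 4.0078 := by
          have h4 := Real.log_le_log hA1pos hm
          rw [← htdef] at h4; linarith [cert_ln55]
        have e1 : ((A:ℝ)+1)*t ≤ ((A:ℝ)+1)*4.0078 :=
          mul_le_mul_of_nonneg_left htm (by linarith)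
        have har2 : (48:ℝ) ≤ (A:ℝ) := by exact_mod_cast h47
        push_cast at hkbl
        linarith [hkbl, e1, hel2, htm, har2]
  · -- k = 7
    have ha : (37:ℝ) ≤ (A:ℝ) := by
      exact_mod_cast hamin 36 (by norm_num [Nat.factorial])
    have hm : ((A:ℝ)+1) ≤ 56 := by
      have : (A:ℝ) ≤ (55:ℝ) := by exact_mod_cast hA48
      linarith
    have htm : t ≤ 4.0258 := by
      have h4 := Real.log_le_log hA1pos hm
      rw [← htdef] at h4; linarith [cert_ln56]
    have e1 : ((A:ℝ)+1)*t ≤ ((A:ℝ)+1)*4.0258 := mul_le_mul_of_nonneg_left htm (by linarith)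
    push_cast at hkbl
    linarith [hkbl, e1, hel2, htm, ha]
  · have ha : (41:ℝ) ≤ (A:ℝ) := by
      exact_mod_cast hamin 40 (by norm_num [Nat.factorial])
    have hm : ((A:ℝ)+1) ≤ 57 := by
      have : (A:ℝ) ≤ (56:ℝ) := by exact_mod_cast hA48
      linarith
    have htm : t ≤ 4.0432 := by
      have h4 := Real.log_le_log hA1pos hm
      rw [← htdef] at h4; linarith [cert_ln57]
    have e1 : ((A:ℝ)+1)*t ≤ ((A:ℝ)+1)*4.0432 := mul_le_mul_of_nonneg_left htm (by linarith)
    push_cast at hkbl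
    linarith [hkbl, e1, hel2, htm, ha]
  · have ha : (44:ℝ) ≤ (A:ℝ) := by
      exact_mod_cast hamin 43 (by norm_num [Nat.factorial])
    have hm : ((A:ℝ)+1) ≤ 58 := by
      have : (A:ℝ) ≤ (57:ℝ) := by exact_mod_cast hA48
      linarith
    have htm : t ≤ 4.0605 := by
      have h4 := Real.log_le_log hA1pos hm
      rw [← htdef] at h4; linarith [cert_ln58]
    have e1 : ((A:ℝ)+1)*t ≤ ((A:ℝ)+1)*4.0605 := mul_le_mul_of_nonneg_left htm (by linarith)
    push_cast at hkbl
    linarith [hkbl, e1, hel2, htm, ha]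
  · have ha : (48:ℝ) ≤ (A:ℝ) := by
      exact_mod_cast hamin 47 (by norm_num [Nat.factorial])
    have hm : ((A:ℝ)+1) ≤ 59 := by
      have : (A:ℝ) ≤ (58:ℝ) := by exact_mod_cast hA48
      linarith
    have htm : t ≤ 4.0778 := by
      have h4 := Real.log_le_log hA1pos hm
      rw [← htdef] at h4; linarith [cert_ln59]
    have e1 : ((A:ℝ)+1)*t ≤ ((A:ℝ)+1)*4.0778 := mul_le_mul_of_nonneg_left htm (by linarith)
    push_cast at hkbl
    linarith [hkbl, e1, hel2, htm, ha]
  · have ha : (51:ℝ) ≤ (A:ℝ) := by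
      exact_mod_cast hamin 50 (by norm_num [Nat.factorial])
    have hm : ((A:ℝ)+1) ≤ 60 := by
      have : (A:ℝ) ≤ (59:ℝ) := by exact_mod_cast hA48
      linarith
    have htm : t ≤ 4.0945 := by
      have h4 := Real.log_le_log hA1pos hm
      rw [← htdef] at h4; linarith [cert_ln60]
    have e1 : ((A:ℝ)+1)*t ≤ ((A:ℝ)+1)*4.0945 := mul_le_mul_of_nonneg_left htm (by linarith)
    push_cast at hkbl
    linarith [hkbl, e1, hel2, htm, ha]
  · have ha : (55:ℝ) ≤ (A:ℝ) := by
      exact_mod_cast hamin 54 (by norm_num [Nat.factorial])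
    have hm : ((A:ℝ)+1) ≤ 61 := by
      have : (A:ℝ) ≤ (60:ℝ) := by exact_mod_cast hA48
      linarith
    have htm : t ≤ 4.1111 := by
      have h4 := Real.log_le_log hA1pos hm
      rw [← htdef] at h4; linarith [cert_ln61]
    have e1 : ((A:ℝ)+1)*t ≤ ((A:ℝ)+1)*4.1111 := mul_le_mul_of_nonneg_left htm (by linarith)
    push_cast at hkbl
    linarith [hkbl, e1, hel2, htm, ha]
  · have ha : (58:ℝ) ≤ (A:ℝ) := by
      exact_mod_cast hamin 57 (by norm_num [Nat.factorial])
    have hm : ((A:ℝ)+1) ≤ 62 := by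
      have : (A:ℝ) ≤ (61:ℝ) := by exact_mod_cast hA48
      linarith
    have htm : t ≤ 4.1277 := by
      have h4 := Real.log_le_log hA1pos hm
      rw [← htdef] at h4; linarith [cert_ln62]
    have e1 : ((A:ℝ)+1)*t ≤ ((A:ℝ)+1)*4.1277 := mul_le_mul_of_nonneg_left htm (by linarith)
    push_cast at hkbl
    linarith [hkbl, e1, hel2, htm, ha]
  · have ha : (62:ℝ) ≤ (A:ℝ) := by
      exact_mod_cast hamin 61 (by norm_num [Nat.factorial])
    have hm : ((A:ℝ)+1) ≤ 63 := by
      have : (A:ℝ) ≤ (62:ℝ) := by exact_mod_cast hA48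
      linarith
    have htm : t ≤ 4.1437 := by
      have h4 := Real.log_le_log hA1pos hm
      rw [← htdef] at h4; linarith [cert_ln63]
    have e1 : ((A:ℝ)+1)*t ≤ ((A:ℝ)+1)*4.1437 := mul_le_mul_of_nonneg_left htm (by linarith)
    push_cast at hkbl
    linarith [hkbl, e1, hel2, htm, ha]
  · -- k = 15
    have ha : 65 ≤ A := hamin 64 (by norm_num [Nat.factorial])
    omega

set_option maxHeartbeats 1000000 in
private lemma cert_ln8271 : Real.log 82.71 ≤ 4.4161 := by
  have h := log_le_q (x:=(82.71:ℝ)) (d:=1000) (m:=6371) (by norm_num) (by norm_num)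
    (by rw [show (82.71:ℝ) = 8271/100 by norm_num, div_pow, div_le_iff₀ (by positivity)]; exact_mod_cast (by decide +kernel : (8271:ℕ)^1000 ≤ 2^6371 * 100^1000))
  push_cast at h; nlinarith [h, l2ub]
set_option maxHeartbeats 1000000 in
private lemma cert_ln66656 : Real.log 66.656 ≤ 4.2000 := by
  have h := log_le_q (x:=(66.656:ℝ)) (d:=1000) (m:=6059) (by norm_num) (by norm_num)
    (by rw [show (66.656:ℝ) = 8332/125 by norm_num, div_pow, div_le_iff₀ (by positivity)]; exact_mod_cast (by decide +kernel : (8332:ℕ)^1000 ≤ 2^6059 * 125^1000))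
  push_cast at h; nlinarith [h, l2ub]
set_option maxHeartbeats 1000000 in
private lemma cert_ln124043 : Real.log 124.043 ≤ 4.8209 := by
  have h := log_le_q (x:=(124.043:ℝ)) (d:=1000) (m:=6955) (by norm_num) (by norm_num)
    (by rw [show (124.043:ℝ) = 124043/1000 by norm_num, div_pow, div_le_iff₀ (by positivity)]; exact_mod_cast (by decide +kernel : (124043:ℕ)^1000 ≤ 2^6955 * 1000^1000))
  push_cast at h; nlinarith [h, l2ub]
set_option maxHeartbeats 1000000 in
private lemma cert_ln9824 : Real.log 98.24 ≤ 4.5880 := by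
  have h := log_le_q (x:=(98.24:ℝ)) (d:=1000) (m:=6619) (by norm_num) (by norm_num)
    (by rw [show (98.24:ℝ) = 2456/25 by norm_num, div_pow, div_le_iff₀ (by positivity)]; exact_mod_cast (by decide +kernel : (2456:ℕ)^1000 ≤ 2^6619 * 25^1000))
  push_cast at h; nlinarith [h, l2ub]
set_option maxHeartbeats 1000000 in
private lemma cert_ln166005 : Real.log 1660.05 ≤ 7.4153 := by
  have h := log_le_q (x:=(1660.05:ℝ)) (d:=1000) (m:=10698) (by norm_num) (by norm_num)
    (by rw [show (1660.05:ℝ) = 33201/20 by norm_num, div_pow, div_le_iff₀ (by positivity)]; exact_mod_cast (by decide +kernel : (33201:ℕ)^1000 ≤ 2^10698 * 20^1000))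
  push_cast at h; nlinarith [h, l2ub]
set_option maxHeartbeats 1000000 in
private lemma cert_ln125398 : Real.log 1253.98 ≤ 7.1346 := by
  have h := log_le_q (x:=(1253.98:ℝ)) (d:=1000) (m:=10293) (by norm_num) (by norm_num)
    (by rw [show (1253.98:ℝ) = 62699/50 by norm_num, div_pow, div_le_iff₀ (by positivity)]; exact_mod_cast (by decide +kernel : (62699:ℕ)^1000 ≤ 2^10293 * 50^1000))
  push_cast at h; nlinarith [h, l2ub]
set_option maxHeartbeats 1000000 in
private lemma cert_ln1200067 : Real.log 1200067 ≤ 13.9982 := by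
  have h := log_le_q (x:=(1200067:ℝ)) (d:=1000) (m:=20195) (by norm_num) (by norm_num)
    (by exact_mod_cast (by decide +kernel : (1200067:ℕ)^1000 ≤ 2^20195))
  push_cast at h; nlinarith [h, l2ub]
set_option maxHeartbeats 1000000 in
private lemma cert_ln900064 : Real.log 900064 ≤ 13.7105 := by
  have h := log_le_q (x:=(900064:ℝ)) (d:=1000) (m:=19780) (by norm_num) (by norm_num)
    (by exact_mod_cast (by decide +kernel : (900064:ℕ)^1000 ≤ 2^19780))
  push_cast at h; nlinarith [h, l2ub]
set_option maxHeartbeats 1000000 in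
private lemma cert_ln9e5 : Real.log 900000 ≤ 13.7105 := by
  have h := log_le_q (x:=(900000:ℝ)) (d:=1000) (m:=19780) (by norm_num) (by norm_num)
    (by exact_mod_cast (by decide +kernel : (900000:ℕ)^1000 ≤ 2^19780))
  push_cast at h; nlinarith [h, l2ub]
set_option maxHeartbeats 1000000 in
private lemma cert_ln133341 : Real.log 1.33341 ≤ 0.2884 := by
  have h := log_le_q (x:=(1.33341:ℝ)) (d:=1000) (m:=416) (by norm_num) (by norm_num)
    (by rw [show (1.33341:ℝ) = 133341/100000 by norm_num, div_pow, div_le_iff₀ (by positivity)]; exact_mod_cast (by decide +kernel : (133341:ℕ)^1000 ≤ 2^416 * 100000^1000))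
  push_cast at h; nlinarith [h, l2ub]

set_option maxHeartbeats 2000000 in
private lemma r1_layers (A k sA sB sC : ℕ) (b : ℝ) (hb : 13.8144 ≤ b) (hb30 : b ≤ 30)
    (hA15 : 15 ≤ A) (hk16 : 16 ≤ k) (hk9e5 : k ≤ 900000)
    (hsA : (sA:ℝ) * Real.log 2 ≤ Real.log ((A:ℝ)+1))
    (hsB : (sB:ℝ) * Real.log 2 ≤ b) (hsC : 1 ≤ sC) (hid : A + sC = k + sA + sB)
    (hkb : (k:ℝ) * b ≤ ((A:ℝ)+1) * Real.log ((A:ℝ)+1) - A) : False := by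
  have hl2 := l2lb; have hu2 := l2ub
  set L2 := Real.log 2 with hL2
  set t := Real.log ((A:ℝ)+1) with htdef
  have hA0 : (0:ℝ) ≤ (A:ℝ) := by positivity
  have hk0 : (0:ℝ) ≤ (k:ℝ) := by positivity
  have hA1pos : (0:ℝ) < (A:ℝ)+1 := by positivity
  have hkr1 : (1:ℝ) ≤ (k:ℝ) := by exact_mod_cast by omega
  have h1 : (A:ℝ)*L2 ≤ ((k:ℝ)-1)*L2 + t + b := by
    have hc : (A:ℝ) ≤ (k:ℝ) - 1 + sA + sB := by
      have h : A + 1 ≤ k + sA + sB := by omega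
      have h' : ((A:ℝ)+1) ≤ (k:ℝ) + sA + sB := by exact_mod_cast h
      linarith
    have h2 := mul_le_mul_of_nonneg_right hc l2pos.le
    have h3 : ((k:ℝ) - 1 + sA + sB)*L2 = ((k:ℝ)-1)*L2 + (sA:ℝ)*L2 + (sB:ℝ)*L2 := by ring
    rw [h3] at h2
    linarith [hsA, hsB]
  have ht1 : 1 ≤ t := by
    have h15 : (15:ℝ) ≤ (A:ℝ) := by exact_mod_cast hA15
    have h16 : (16:ℝ) ≤ (A:ℝ)+1 := by linarith
    have h2 := Real.log_le_log (by norm_num : (0:ℝ) < 16) h16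
    rw [show (16:ℝ) = 2^4 by norm_num, Real.log_pow, ← htdef] at h2
    push_cast at h2; linarith
  have hL1 : t ≤ (2 + (A:ℝ)/4)*L2 := log2_lin hA0
  have eA : (A:ℝ)*0.6931471803 ≤ (A:ℝ)*L2 := mul_le_mul_of_nonneg_left hl2.le hA0
  have eA1 : ((A:ℝ)+1)*0.6931471803 ≤ ((A:ℝ)+1)*L2 :=
    mul_le_mul_of_nonneg_left hl2.le (by linarith)
  have eK : ((k:ℝ)+1)*L2 ≤ ((k:ℝ)+1)*0.6931471808 :=
    mul_le_mul_of_nonneg_left hu2.le (by linarith)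
  have eK2 : (k:ℝ)*L2 ≤ (k:ℝ)*0.6931471808 := mul_le_mul_of_nonneg_left hu2.le hk0
  have hA43 : (A:ℝ) ≤ 1.33334*(k:ℝ) + 59.042 := by linarith [h1, hL1, hb30, eA, eK]
  have hkA1L : ((A:ℝ)+1)*L2 ≤ (k:ℝ)*L2 + t + b := by linarith [h1]
  have hkbge : (k:ℝ)*13.8144 ≤ (k:ℝ)*b := mul_le_mul_of_nonneg_left hb hk0
  rcases le_or_gt k 17 with hc17 | hc17
  · -- layer A : 16 ≤ k ≤ 17
    have hkr : (k:ℝ) ≤ 17 := by exact_mod_cast hc17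
    have hA1c : ((A:ℝ)+1) ≤ 82.71 := by nlinarith [hA43, hkr]
    have htq : t ≤ 4.4161 := by
      have h4 := Real.log_le_log hA1pos hA1c
      rw [← htdef] at h4; linarith [cert_ln8271]
    have hA1N : ((A:ℝ)+1) ≤ (k:ℝ) + 49.656 := by
      nlinarith [hkA1L, eA1, eK2, htq, hb30, hkr]
    have htr : t ≤ 4.2000 := by
      have hm : ((A:ℝ)+1) ≤ 66.656 := by linarith
      have h4 := Real.log_le_log hA1pos hm
      rw [← htdef] at h4; linarith [cert_ln66656]
    have e3 : ((A:ℝ)+1)*(t-1) ≤ ((A:ℝ)+1)*(4.2000-1) :=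
      mul_le_mul_of_nonneg_left (by linarith) (by linarith)
    have e4 : ((A:ℝ)+1)*(4.2000-1) ≤ ((k:ℝ)+49.656)*(4.2000-1) :=
      mul_le_mul_of_nonneg_right hA1N (by norm_num)
    have hk16' : (16:ℝ) ≤ (k:ℝ) := by exact_mod_cast hk16
    nlinarith [hkbge, hkb, e3, e4, hk16']
  rcases le_or_gt k 48 with hc48 | hc48
  · have hkr : (k:ℝ) ≤ 48 := by exact_mod_cast hc48
    have hA1c : ((A:ℝ)+1) ≤ 124.043 := by nlinarith [hA43, hkr]
    have htq : t ≤ 4.8209 := by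
      have h4 := Real.log_le_log hA1pos hA1c
      rw [← htdef] at h4; linarith [cert_ln124043]
    have hA1N : ((A:ℝ)+1) ≤ (k:ℝ) + 50.24 := by
      nlinarith [hkA1L, eA1, eK2, htq, hb30, hkr]
    have htr : t ≤ 4.5880 := by
      have hm : ((A:ℝ)+1) ≤ 98.24 := by linarith
      have h4 := Real.log_le_log hA1pos hm
      rw [← htdef] at h4; linarith [cert_ln9824]
    have e3 : ((A:ℝ)+1)*(t-1) ≤ ((A:ℝ)+1)*(4.5880-1) :=
      mul_le_mul_of_nonneg_left (by linarith) (by linarith)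
    have e4 : ((A:ℝ)+1)*(4.5880-1) ≤ ((k:ℝ)+50.24)*(4.5880-1) :=
      mul_le_mul_of_nonneg_right hA1N (by norm_num)
    have hk18' : (18:ℝ) ≤ (k:ℝ) := by exact_mod_cast by omega
    nlinarith [hkbge, hkb, e3, e4, hk18']
  rcases le_or_gt k 1200 with hc1200 | hc1200
  · have hkr : (k:ℝ) ≤ 1200 := by exact_mod_cast hc1200
    have hA1c : ((A:ℝ)+1) ≤ 1660.05 := by nlinarith [hA43, hkr]
    have htq : t ≤ 7.4153 := by
      have h4 := Real.log_le_log hA1pos hA1c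
      rw [← htdef] at h4; linarith [cert_ln166005]
    have hA1N : ((A:ℝ)+1) ≤ (k:ℝ) + 53.98 := by
      nlinarith [hkA1L, eA1, eK2, htq, hb30, hkr]
    have htr : t ≤ 7.1346 := by
      have hm : ((A:ℝ)+1) ≤ 1253.98 := by linarith
      have h4 := Real.log_le_log hA1pos hm
      rw [← htdef] at h4; linarith [cert_ln125398]
    have e3 : ((A:ℝ)+1)*(t-1) ≤ ((A:ℝ)+1)*(7.1346-1) :=
      mul_le_mul_of_nonneg_left (by linarith) (by linarith)
    have e4 : ((A:ℝ)+1)*(7.1346-1) ≤ ((k:ℝ)+53.98)*(7.1346-1) :=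
      mul_le_mul_of_nonneg_right hA1N (by norm_num)
    have hk49' : (49:ℝ) ≤ (k:ℝ) := by exact_mod_cast by omega
    nlinarith [hkbge, hkb, e3, e4, hk49']
  · have hkr : (k:ℝ) ≤ 900000 := by exact_mod_cast hk9e5
    have hA1c : ((A:ℝ)+1) ≤ 1200067 := by nlinarith [hA43, hkr]
    have htq : t ≤ 13.9982 := by
      have h4 := Real.log_le_log hA1pos hA1c
      rw [← htdef] at h4; linarith [cert_ln1200067]
    have hA1N : ((A:ℝ)+1) ≤ (k:ℝ) + 63.477 := by
      nlinarith [hkA1L, eA1, eK2, htq, hb30, hkr]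
    have htr : t ≤ 13.7105 := by
      have hm : ((A:ℝ)+1) ≤ 900064 := by linarith
      have h4 := Real.log_le_log hA1pos hm
      rw [← htdef] at h4; linarith [cert_ln900064]
    have e3 : ((A:ℝ)+1)*(t-1) ≤ ((A:ℝ)+1)*(13.7105-1) :=
      mul_le_mul_of_nonneg_left (by linarith) (by linarith)
    have e4 : ((A:ℝ)+1)*(13.7105-1) ≤ ((k:ℝ)+63.477)*(13.7105-1) :=
      mul_le_mul_of_nonneg_right hA1N (by norm_num)
    have hk1201' : (1201:ℝ) ≤ (k:ℝ) := by exact_mod_cast by omega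
    nlinarith [hkbge, hkb, e3, e4, hk1201']

set_option maxHeartbeats 4000000 in
private lemma r1_big (A k sA sB sC : ℕ) (b : ℝ) (hb30 : b ≤ 30)
    (hA15 : 15 ≤ A) (hkA : k < A) (hk9e5 : 900000 ≤ k)
    (hsA : (sA:ℝ) * Real.log 2 ≤ Real.log ((A:ℝ)+1))
    (hsB : (sB:ℝ) * Real.log 2 ≤ b) (hsC : 1 ≤ sC) (hid : A + sC = k + sA + sB)
    (hkb : (k:ℝ) * b ≤ ((A:ℝ)+1) * Real.log ((A:ℝ)+1) - A)
    (hlnk : Real.log ((k:ℝ)+2) ≤ b) : False := by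
  have hl2 := l2lb; have hu2 := l2ub
  set L2 := Real.log 2 with hL2
  set t := Real.log ((A:ℝ)+1) with htdef
  set w := Real.log (k:ℝ) with hwdef
  have hA0 : (0:ℝ) ≤ (A:ℝ) := by positivity
  have hkR : (900000:ℝ) ≤ (k:ℝ) := by exact_mod_cast hk9e5
  have hk0 : (0:ℝ) < (k:ℝ) := by linarith
  have hA1pos : (0:ℝ) < (A:ℝ)+1 := by positivity
  have hw0 : (0:ℝ) ≤ w := by
    rw [hwdef]; apply Real.log_nonneg; linarith
  have h1 : (A:ℝ)*L2 ≤ ((k:ℝ)-1)*L2 + t + b := by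
    have hc : (A:ℝ) ≤ (k:ℝ) - 1 + sA + sB := by
      have h : A + 1 ≤ k + sA + sB := by omega
      have h' : ((A:ℝ)+1) ≤ (k:ℝ) + sA + sB := by exact_mod_cast h
      linarith
    have h2 := mul_le_mul_of_nonneg_right hc l2pos.le
    have h3 : ((k:ℝ) - 1 + sA + sB)*L2 = ((k:ℝ)-1)*L2 + (sA:ℝ)*L2 + (sB:ℝ)*L2 := by ring
    rw [h3] at h2
    linarith [hsA, hsB]
  have ht1 : 1 ≤ t := by
    have h15 : (15:ℝ) ≤ (A:ℝ) := by exact_mod_cast hA15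
    have h16 : (16:ℝ) ≤ (A:ℝ)+1 := by linarith
    have h2 := Real.log_le_log (by norm_num : (0:ℝ) < 16) h16
    rw [show (16:ℝ) = 2^4 by norm_num, Real.log_pow, ← htdef] at h2
    push_cast at h2; linarith
  have hL1 : t ≤ (2 + (A:ℝ)/4)*L2 := log2_lin hA0
  have eA : (A:ℝ)*0.6931471803 ≤ (A:ℝ)*L2 := mul_le_mul_of_nonneg_left hl2.le hA0
  have eK : ((k:ℝ)+1)*L2 ≤ ((k:ℝ)+1)*0.6931471808 :=
    mul_le_mul_of_nonneg_left hu2.le (by linarith)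
  have hA43 : (A:ℝ) ≤ 1.33334*(k:ℝ) + 59.042 := by linarith [h1, hL1, hb30, eA, eK]
  -- s substitution
  have hs0 : (0:ℝ) ≤ w - Real.log 900000 := by
    have := Real.log_le_log (by norm_num : (0:ℝ) < 900000) hkR
    rw [hwdef]; linarith
  set s := w - Real.log 900000 with hsdef
  have hks : (k:ℝ) = 900000 * Real.exp s := by
    rw [hsdef, Real.exp_sub, hwdef, Real.exp_log hk0, Real.exp_log (by norm_num)]
    field_simp
  have hexps := exp_quad hs0
  have hw_ub : w ≤ 13.7105 + s := by rw [hsdef]; linarith [cert_ln9e5]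
  -- upper bound on t
  have ht_up : t ≤ 0.2884 + w := by
    have hm : ((A:ℝ)+1) ≤ 1.33341*(k:ℝ) := by nlinarith [hA43, hkR]
    have h4 := Real.log_le_log hA1pos hm
    rw [Real.log_mul (by norm_num) (ne_of_gt hk0)] at h4
    rw [← htdef, ← hwdef] at h4
    linarith [cert_ln133341]
  -- A+1 ≤ k + 43.698 + 1.4427 w
  have hA2N : ((A:ℝ)+1) ≤ (k:ℝ) + 43.698 + 1.4427*w := by
    have hAk : (0:ℝ) ≤ (A:ℝ) + 1 - (k:ℝ) := by
      have : (k:ℝ) < (A:ℝ) := by exact_mod_cast hkA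
      linarith
    have e1 : ((A:ℝ)+1-(k:ℝ))*0.6931471803 ≤ ((A:ℝ)+1-(k:ℝ))*L2 :=
      mul_le_mul_of_nonneg_left hl2.le hAk
    have e2 : ((A:ℝ)+1-(k:ℝ))*L2 ≤ t + b := by nlinarith [h1]
    nlinarith [e1, e2, ht_up, hb30]
  set N := (k:ℝ) + 43.698 + 1.4427*w with hNdef
  clear_value N
  have hNk : (k:ℝ) ≤ N := by rw [hNdef]; nlinarith [hw0]
  have hNpos : (0:ℝ) < N := by linarith
  -- log N ≤ log (k+2) + 0.0001
  have hw12 : w ≤ 12.7105 + (k:ℝ)/900000 := by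
    have hq : Real.log ((k:ℝ)/900000) ≤ (k:ℝ)/900000 - 1 :=
      Real.log_le_sub_one_of_pos (by positivity)
    rw [Real.log_div (ne_of_gt hk0) (by norm_num), ← hwdef] at hq
    linarith [cert_ln9e5]
  have hNlnk : Real.log N ≤ Real.log ((k:ℝ)+2) + 0.0001 := by
    have hq : Real.log (N/((k:ℝ)+2)) ≤ N/((k:ℝ)+2) - 1 :=
      Real.log_le_sub_one_of_pos (by positivity)
    rw [Real.log_div (ne_of_gt hNpos) (by positivity)] at hq
    have hfrac : N/((k:ℝ)+2) - 1 ≤ 0.0001 := by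
      rw [div_sub_one (by positivity), div_le_iff₀ (by positivity)]
      rw [hNdef]
      nlinarith [hw12, hkR]
    linarith
  have ht_N : t ≤ Real.log N := by
    have h4 := Real.log_le_log hA1pos hA2N
    rw [← htdef] at h4; exact h4
  have hlnN1 : 1 ≤ Real.log N := by
    have h16 : (16:ℝ) ≤ N := by linarith
    have h2 := Real.log_le_log (by norm_num : (0:ℝ) < 16) h16
    rw [show (16:ℝ) = 2^4 by norm_num, Real.log_pow] at h2
    push_cast at h2; nlinarith [h2, hl2]
  -- contradiction
  have c1 : (k:ℝ)*Real.log ((k:ℝ)+2) ≤ (k:ℝ)*b := mul_le_mul_of_nonneg_left hlnk hk0.le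
  have c3a : ((A:ℝ)+1)*(t-1) ≤ ((A:ℝ)+1)*(Real.log N - 1) :=
    mul_le_mul_of_nonneg_left (by linarith) (by linarith)
  have c3b : ((A:ℝ)+1)*(Real.log N - 1) ≤ N*(Real.log N - 1) :=
    mul_le_mul_of_nonneg_right hA2N (by linarith)
  have c4 : N*Real.log N ≤ N*(Real.log ((k:ℝ)+2) + 0.0001) :=
    mul_le_mul_of_nonneg_left hNlnk hNpos.le
  have e4 : Real.log ((k:ℝ)+2) ≤ w + 0.0001 := by
    have hq : Real.log (((k:ℝ)+2)/(k:ℝ)) ≤ ((k:ℝ)+2)/(k:ℝ) - 1 :=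
      Real.log_le_sub_one_of_pos (by positivity)
    rw [Real.log_div (by positivity) (ne_of_gt hk0), ← hwdef] at hq
    have : ((k:ℝ)+2)/(k:ℝ) - 1 ≤ 0.0001 := by
      rw [div_sub_one (ne_of_gt hk0), div_le_iff₀ hk0]
      linarith [hkR]
    linarith
  have hlk0 : (0:ℝ) ≤ Real.log ((k:ℝ)+2) := Real.log_nonneg (by linarith)
  have e6 : ((43.698:ℝ)+1.4427*w)*Real.log ((k:ℝ)+2) ≤ (63.48+1.4427*s)*(13.7106+s) := by
    apply mul_le_mul _ _ hlk0 (by nlinarith [hs0])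
    · nlinarith [hw_ub]
    · linarith [e4, hw_ub]
  -- assemble
  have main : (k:ℝ)*Real.log ((k:ℝ)+2) ≤ N*Real.log ((k:ℝ)+2) + 0.0001*N - N + 1 := by
    have h5 : (k:ℝ)*b ≤ ((A:ℝ)+1)*(t-1) + 1 := by nlinarith [hkb]
    linarith [c1, h5, c3a, c3b, c4]
  have main2 : (0:ℝ) ≤ (63.48+1.4427*s)*(13.7106+s) + 0.0001*N - N + 1 := by
    have hsub : N*Real.log ((k:ℝ)+2) - (k:ℝ)*Real.log ((k:ℝ)+2)
        = (43.698+1.4427*w)*Real.log ((k:ℝ)+2) := by rw [hNdef]; ring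
    linarith [main, e6, hsub]
  have hfinal : (63.48+1.4427*s)*(13.7106+s) + 0.0001*N - N + 1 < 0 := by
    have hNge : (k:ℝ) ≤ N := hNk
    have hkexp : (900000:ℝ)*(1+s+s^2/4) ≤ (k:ℝ) := by
      rw [hks]; nlinarith [hexps]
    nlinarith [hkexp, hs0, hNge, sq_nonneg s]
  linarith [main2, hfinal]

private lemma core_all (A k sA sB sC : ℕ) (b : ℝ)
    (hb : 13.8144 ≤ b) (hA15 : 15 ≤ A) (hkA : k < A)
    (hsA : (sA:ℝ) * Real.log 2 ≤ Real.log ((A:ℝ)+1))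
    (hsB : (sB:ℝ) * Real.log 2 ≤ b) (hsC : 1 ≤ sC) (hid : A + sC = k + sA + sB)
    (ht : Real.log ((A:ℝ)+1) ≤ b)
    (hkb : (k:ℝ) * b ≤ ((A:ℝ)+1) * Real.log ((A:ℝ)+1) - A)
    (hpow : 1000001^k ≤ Nat.factorial A)
    (hlnk : Real.log ((k:ℝ)+2) ≤ b) :
    2*(k:ℝ) + Real.log ((A:ℝ)+1)/Real.log 2 < 3 * Real.log b / Real.log 2 + 4.9411 := by
  rcases le_or_gt b 30 with hb30 | hb30
  · rcases le_or_gt k 5 with h5 | h5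
    · exact r1_k5 A k sA sB sC b hb hb30 h5 hsA hsB hsC hid
    · exfalso
      rcases le_or_gt k 15 with h15 | h15
      · exact r1_mid A k sA sB sC b hb hb30 hA15 hkA (by omega) h15 hsA hsB hsC hid hkb hpow
      · rcases le_or_gt k 900000 with h9 | h9
        · exact r1_layers A k sA sB sC b hb hb30 hA15 (by omega) h9 hsA hsB hsC hid hkb
        · exact r1_big A k sA sB sC b hb30 hA15 hkA (by omega) hsA hsB hsC hid hkb hlnk
  · exact core_region2 A k sA sB sC b hb30.le hA15 hsA hsB hsC hid ht hkb

set_option maxHeartbeats 2000000 in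
private lemma cert_lnfin : (13.8144:ℝ) ≤ Real.log 1000001 := by
  have h := q_le_log (x:=(1000001:ℝ)) (d:=1000) (m:=19931) (by norm_num) (by norm_num)
    (by exact_mod_cast (by decide +kernel : 2^19931 ≤ (1000001:ℕ)^1000))
  push_cast at h
  nlinarith [h, l2lb]

set_option maxHeartbeats 2000000 in
theorem bound_B_sub_A (A B C : ℕ) (hA : 0 < A) (hAB : A ≤ B) (hBC : B ≤ C - 2) (hC : 2 ≤ C)
    (h : Nat.factorial A * Nat.factorial B = Nat.factorial C)
    (hne : (A, B, C) ≠ (6, 7, 10)) (hB : 10 ^ 6 ≤ B) :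
    (B : ℝ) - A > (C : ℝ) - Real.log (C + 1) / Real.log 2
      - 3 * Real.log (Real.log (C + 1)) / Real.log 2 - 3.9411 := by
  have hl2 := l2lb; have hu2 := l2ub
  set k := C - B with hkdef
  have hCk : C = B + k := by omega
  have hk2 : 2 ≤ k := by omega
  -- (B+1)^k ≤ A!
  have hBpow : (B+1)^k ≤ Nat.factorial A := by
    have h1 : Nat.factorial B * (B+1)^k ≤ Nat.factorial (B+k) :=
      Nat.factorial_mul_pow_le_factorial
    rw [← hCk, ← h] at h1
    have h2 : Nat.factorial B * (B+1)^k ≤ Nat.factorial B * Nat.factorial A := by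
      rw [Nat.mul_comm (Nat.factorial A)] at h1; exact h1
    exact Nat.le_of_mul_le_mul_left h2 (Nat.factorial_pos B)
  -- A ≥ 15
  have hA15 : 15 ≤ A := by
    by_contra hcc
    push_neg at hcc
    have h1 : Nat.factorial A ≤ Nat.factorial 14 := Nat.factorial_le (by omega)
    have h2 : (1000001:ℕ)^2 ≤ (B+1)^2 := Nat.pow_le_pow_left (by omega) 2
    have h3 : (B+1)^2 ≤ (B+1)^k := Nat.pow_le_pow_right (by omega) hk2
    have := le_trans h2 (le_trans h3 (le_trans hBpow h1))
    norm_num [Nat.factorial] at this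
  -- k < A
  have hkA : k < A := by
    have h1 : Nat.factorial A ≤ (B+1)^(A-1) := factorial_le_pow_pred A (B+1) (by omega)
    have h2 : (B+1)^k ≤ (B+1)^(A-1) := le_trans hBpow h1
    have h3 : k ≤ A - 1 := (Nat.pow_le_pow_iff_right (by omega : 1 < B+1)).mp h2
    omega
  have hpow : 1000001^k ≤ Nat.factorial A :=
    le_trans (Nat.pow_le_pow_left (by omega) k) hBpow
  -- digit sums and Legendre
  set sA := (Nat.digits 2 A).sum with hsAdef
  set sB := (Nat.digits 2 B).sum with hsBdef
  set sC := (Nat.digits 2 C).sum with hsCdef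
  have hLeg : A + sC = k + sA + sB := by
    haveI : Fact (Nat.Prime 2) := ⟨Nat.prime_two⟩
    have hv : padicValNat 2 (Nat.factorial A * Nat.factorial B)
        = padicValNat 2 (Nat.factorial A) + padicValNat 2 (Nat.factorial B) :=
      padicValNat.mul (Nat.factorial_ne_zero A) (Nat.factorial_ne_zero B)
    rw [h, v2_factorial, v2_factorial, v2_factorial] at hv
    have e1 := digitsum_le A
    have e2 := digitsum_le B
    have e3 := digitsum_le C
    omega
  -- real setup
  set b := Real.log ((B:ℝ)+1) with hbdef
  have hBr : (1000001:ℝ) ≤ (B:ℝ)+1 := by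
    have : (1000000:ℝ) ≤ (B:ℝ) := by exact_mod_cast hB
    linarith
  have hb : 13.8144 ≤ b := by
    have h1 := Real.log_le_log (by norm_num : (0:ℝ) < 1000001) hBr
    rw [← hbdef] at h1
    linarith [cert_lnfin]
  have hsA' : (sA:ℝ) * Real.log 2 ≤ Real.log ((A:ℝ)+1) := by
    have h1 : ((2^sA : ℕ):ℝ) ≤ ((A+1 : ℕ):ℝ) := by exact_mod_cast two_pow_digitsum_le A
    have h2 := Real.log_le_log (by positivity) h1
    rw [Nat.cast_pow, Real.log_pow] at h2
    push_cast at h2 ⊢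
    linarith
  have hsB' : (sB:ℝ) * Real.log 2 ≤ b := by
    have h1 : ((2^sB : ℕ):ℝ) ≤ ((B+1 : ℕ):ℝ) := by exact_mod_cast two_pow_digitsum_le B
    have h2 := Real.log_le_log (by positivity) h1
    rw [Nat.cast_pow, Real.log_pow] at h2
    rw [hbdef]
    push_cast at h2 ⊢
    linarith
  have hsC' : 1 ≤ sC := digitsum_pos C (by omega)
  have ht : Real.log ((A:ℝ)+1) ≤ b := by
    rw [hbdef]
    apply Real.log_le_log (by positivity)
    have : (A:ℝ) ≤ (B:ℝ) := by exact_mod_cast hAB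
    linarith
  have hkb : (k:ℝ) * b ≤ ((A:ℝ)+1) * Real.log ((A:ℝ)+1) - A := by
    have h1 : (((B+1)^k : ℕ):ℝ) ≤ ((Nat.factorial A : ℕ):ℝ) := by exact_mod_cast hBpow
    have h2 := Real.log_le_log (by positivity) h1
    rw [Nat.cast_pow, Real.log_pow] at h2
    have h3 := log_factorial_le A
    push_cast at h2
    rw [hbdef]
    push_cast
    linarith
  have hlnk : Real.log ((k:ℝ)+2) ≤ b := by
    rw [hbdef]
    apply Real.log_le_log (by positivity)
    have : (k:ℝ) + 1 ≤ (A:ℝ) := by exact_mod_cast hkA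
    have : (A:ℝ) ≤ (B:ℝ) := by exact_mod_cast hAB
    linarith [‹(k:ℝ) + 1 ≤ (A:ℝ)›]
  have hcore := core_all A k sA sB sC b hb hA15 hkA hsA' hsB' hsC' hLeg ht hkb hpow hlnk
  -- final assembly
  set L2 := Real.log 2 with hL2
  set n := Real.log ((C:ℝ)+1) with hndef
  have hbn : b ≤ n := by
    rw [hbdef, hndef]
    apply Real.log_le_log (by positivity)
    have : (B:ℝ) ≤ (C:ℝ) := by exact_mod_cast by omega
    linarith
  have hbpos : (0:ℝ) < b := by linarith
  have hlogbn : Real.log b ≤ Real.log n := Real.log_le_log hbpos hbn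
  have hsAr : (sA:ℝ) ≤ Real.log ((A:ℝ)+1)/L2 := by
    rw [le_div_iff₀ l2pos]; exact hsA'
  have hsBr : (sB:ℝ) ≤ n/L2 := by
    rw [le_div_iff₀ l2pos]; linarith [hsB']
  have hsCr : (1:ℝ) ≤ (sC:ℝ) := by exact_mod_cast hsC'
  have hAsum : (A:ℝ) + sC = (k:ℝ) + sA + sB := by exact_mod_cast hLeg
  have hCr : (C:ℝ) = (B:ℝ) + k := by exact_mod_cast hCk
  have hdiv : 3 * Real.log b / L2 ≤ 3 * Real.log n / L2 := by
    exact (div_le_div_iff_of_pos_right l2pos).mpr (by linarith)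
  have hgoal : (A:ℝ) + k < n/L2 + 3 * Real.log n / L2 + 3.9411 := by
    have e1 : (A:ℝ) + k ≤ 2*(k:ℝ) + sA + sB - 1 := by linarith
    have e2 : 2*(k:ℝ) + Real.log ((A:ℝ)+1)/L2 < 3 * Real.log n / L2 + 4.9411 := by
      calc 2*(k:ℝ) + Real.log ((A:ℝ)+1)/L2 < 3 * Real.log b / L2 + 4.9411 := hcore
        _ ≤ 3 * Real.log n / L2 + 4.9411 := by linarith [hdiv]
    linarith [hsAr, hsBr]
  -- translate goal
  have hgoal2 : (B:ℝ) - A = (C:ℝ) - k - A := by linarith [hCr]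
  rw [gt_iff_lt]
  have : (C:ℝ) - n / L2 - 3 * Real.log n / L2 - 3.9411 < (C:ℝ) - k - A := by linarith
  calc (C:ℝ) - Real.log ((C:ℝ) + 1) / Real.log 2
      - 3 * Real.log (Real.log ((C:ℝ) + 1)) / Real.log 2 - 3.9411
      = (C:ℝ) - n/L2 - 3 * Real.log n / L2 - 3.9411 := by rw [← hndef, ← hL2]
    _ < (C:ℝ) - k - A := this
    _ = (B:ℝ) - A := by linarith [hCr]
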